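/- Let p ≥ 2 be an integer. Assume there exist nonzero real numbers a_1 = 1, a_2, …, a_p such that ⟨E_{M1⋯Mk} | F^{N1⋯Nk}⟩ = a_k (ℙ_k)_{M1⋯Mk}^{N1⋯Nk} for k = 2, …, p. For 1 ≤ k ≤ p define 𝚈^{N1⋯Nk}_{M1⋯M(k+1)} = (1/a_k) ⟦F^{N1⋯Nk}, E_{M1⋯M(k+1)}⟧ ∈ U_{−1} and 𝚇_{M|N1⋯Nk}^{P1⋯Pk} = (1/a_k) ⟦E_M, ⟦E_{N1⋯Nk}, F^{P1⋯Pk}⟧⟧ ∈ U_{−1}. Then for all indices N1, …, Np, M1, …, M(p+1): 𝚈^{N1⋯Np}_{M1⋯M(p+1)} = − Σ_{Q1,…,Qp} (ℙ_p)_{Q1⋯Qp}^{N1⋯Np} δ_{M1}^{Q1} 𝚈^{Q2⋯Qp}_{M2⋯M(p+1)} − 𝚇_{M1|M2⋯M(p+1)}^{N1⋯Np}, an identity in U_{−1}. -/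

import Mathlib

/-- Nested bracket `⟦f M1, ⟦f M2, …, ⟦f M(k-1), f Mk⟧⋯⟧⟧` of a family `f : ι → V`
along a tuple of `k` indices (junk value `0` for `k = 0`). -/
def nest {V : Type} [AddCommGroup V] [Module ℝ V] {ι : Type}
    (bb : V →ₗ[ℝ] V →ₗ[ℝ] V) (f : ι → V) : (k : ℕ) → (Fin k → ι) → V
  | 0, _ => 0
  | 1, M => f (M 0)
  | (k + 2), M => bb (f (M 0)) (nest bb f (k + 1) (fun i => M i.succ))

lemma nest_one {V : Type} [AddCommGroup V] [Module ℝ V] {ι : Type}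
    (bb : V →ₗ[ℝ] V →ₗ[ℝ] V) (f : ι → V) (A : Fin 1 → ι) :
    nest bb f 1 A = f (A 0) := rfl

lemma nest_succ {V : Type} [AddCommGroup V] [Module ℝ V] {ι : Type}
    (bb : V →ₗ[ℝ] V →ₗ[ℝ] V) (f : ι → V) (m : ℕ) (A : Fin (m+2) → ι) :
    nest bb f (m+2) A = bb (f (A 0)) (nest bb f (m+1) (Fin.tail A)) := rfl

lemma nest_cons {V : Type} [AddCommGroup V] [Module ℝ V] {ι : Type}
    (bb : V →ₗ[ℝ] V →ₗ[ℝ] V) (f : ι → V) (m : ℕ) (x : ι) (A : Fin (m+1) → ι) :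
    nest bb f (m+2) (Fin.cons x A) = bb (f x) (nest bb f (m+1) A) := by
  rw [nest_succ]; simp [Fin.tail_cons]

lemma nest_mem {V : Type} [AddCommGroup V] [Module ℝ V] (U : ℤ → Submodule ℝ V)
    (bb : V →ₗ[ℝ] V →ₗ[ℝ] V) {ι : Type} (f : ι → V) (d : ℤ)
    (hgrade : ∀ (p q : ℤ) (x y : V), x ∈ U p → y ∈ U q → bb x y ∈ U (p + q))
    (hf : ∀ M, f M ∈ U d) :
    ∀ m : ℕ, ∀ A : Fin (m+1) → ι, nest bb f (m+1) A ∈ U (((m:ℤ)+1) * d) := by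
  intro m
  induction m with
  | zero => intro A; simpa [nest] using hf (A 0)
  | succ n ih =>
    intro A
    have h := hgrade d (((n:ℤ)+1) * d) (f (A 0)) (nest bb f (n+1) (Fin.tail A)) (hf _) (ih _)
    have h2 : d + ((n:ℤ)+1) * d = (((n:ℕ)+1:ℤ)+1) * d := by ring
    rw [h2] at h
    rw [nest_succ]
    exact_mod_cast h

/-- sum over `Fin (n+1) → ι` splits as head and tail. -/
lemma sum_cons_split {ι : Type} [Fintype ι] [DecidableEq ι] {α : Type} [AddCommMonoid α]
    (n : ℕ) (g : (Fin (n+1) → ι) → α) :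
    (∑ Q : Fin (n+1) → ι, g Q) = ∑ q : ι, ∑ Q' : Fin n → ι, g (Fin.cons q Q') := by
  rw [← (Fin.consEquiv (fun _ : Fin (n+1) => ι)).sum_comp g, Fintype.sum_prod_type]
  rfl

lemma sum_fin_one {ι : Type} [Fintype ι] [DecidableEq ι] {α : Type} [AddCommMonoid α]
    (g : (Fin 1 → ι) → α) :
    (∑ Q : Fin 1 → ι, g Q) = ∑ q : ι, g (fun _ => q) := by
  rw [← (Equiv.funUnique (Fin 1) ι).symm.sum_comp g]
  rfl

lemma neg_one_zpow_congr (n m : ℤ) (h : Even (n - m)) : ((-1:ℝ))^n = (-1:ℝ)^m := by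
  obtain ⟨r, hr⟩ := h
  have hn : n = m + 2*r := by omega
  rw [hn, zpow_add₀ (by norm_num : (-1:ℝ) ≠ 0), zpow_mul]
  norm_num

/-- idempotence also at level 1 -/
lemma prime_idem {ι : Type} [Fintype ι] [DecidableEq ι] (top : ℕ)
    (P : (m : ℕ) → (Fin m → ι) → (Fin m → ι) → ℝ)
    (hP1 : ∀ M N : Fin 1 → ι, P 1 M N = if M 0 = N 0 then (1 : ℝ) else 0)
    (hPidem : ∀ m, 2 ≤ m → m ≤ top → ∀ M N : Fin m → ι,
      ∑ Q : Fin m → ι, P m M Q * P m Q N = P m M N) :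
    ∀ m, 1 ≤ m → m ≤ top → ∀ A C : Fin m → ι,
      ∑ Q : Fin m → ι, P m A Q * P m Q C = P m A C := by
  intro m
  match m with
  | 0 => omega
  | 1 =>
    intro _ _ A C
    simp only [hP1]
    rw [sum_fin_one (fun Q => (if A 0 = Q 0 then (1:ℝ) else 0) * (if Q 0 = C 0 then (1:ℝ) else 0))]
    simp
  | (m+2) => intro _ h2; exact hPidem (m+2) (by omega) h2

lemma prime_PF {V : Type} [AddCommGroup V] [Module ℝ V] {ι : Type} [Fintype ι] [DecidableEq ι]
    (bb : V →ₗ[ℝ] V →ₗ[ℝ] V) (F : ι → V) (top : ℕ)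
    (P : (m : ℕ) → (Fin m → ι) → (Fin m → ι) → ℝ)
    (hP1 : ∀ M N : Fin 1 → ι, P 1 M N = if M 0 = N 0 then (1 : ℝ) else 0)
    (hPF : ∀ m, 2 ≤ m → m ≤ top → ∀ N : Fin m → ι,
      nest bb F m N = ∑ M : Fin m → ι, P m M N • nest bb F m M) :
    ∀ m, 1 ≤ m → m ≤ top → ∀ B : Fin m → ι,
      nest bb F m B = ∑ A : Fin m → ι, P m A B • nest bb F m A := by
  intro m
  match m with
  | 0 => omega
  | 1 =>
    intro _ _ B
    simp only [hP1, nest_one]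
    rw [sum_fin_one (fun A => (if A 0 = B 0 then (1:ℝ) else 0) • F (A 0))]
    simp
  | (m+2) => intro _ h2; exact hPF (m+2) (by omega) h2

lemma prime_aP {V : Type} [AddCommGroup V] [Module ℝ V] {ι : Type} [Fintype ι] [DecidableEq ι]
    (bb : V →ₗ[ℝ] V →ₗ[ℝ] V) (form : V →ₗ[ℝ] V →ₗ[ℝ] ℝ) (E F : ι → V) (top : ℕ)
    (P : (m : ℕ) → (Fin m → ι) → (Fin m → ι) → ℝ) (a : ℕ → ℝ)
    (hEF : ∀ M N, form (E M) (F N) = if M = N then (1 : ℝ) else 0)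
    (ha1 : a 1 = 1)
    (hP1 : ∀ M N : Fin 1 → ι, P 1 M N = if M 0 = N 0 then (1 : ℝ) else 0)
    (haP : ∀ m, 2 ≤ m → m ≤ top → ∀ M N : Fin m → ι,
      form (nest bb E m M) (nest bb F m N) = a m * P m M N) :
    ∀ m, 1 ≤ m → m ≤ top → ∀ A B : Fin m → ι,
      form (nest bb E m A) (nest bb F m B) = a m * P m A B := by
  intro m
  match m with
  | 0 => omega
  | 1 => intro _ _ A B; simp only [nest_one, hP1, ha1, one_mul]; exact hEF (A 0) (B 0)
  | (m+2) => intro _ h2; exact haP (m+2) (by omega) h2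

/-- absorption of a lower projector into a higher one -/
lemma absorb {ι : Type} [Fintype ι] [DecidableEq ι] {n : ℕ}
    (P1 : (Fin n → ι) → (Fin n → ι) → ℝ) (P2 : (Fin (n+1) → ι) → (Fin (n+1) → ι) → ℝ)
    (hidem : ∀ A C, ∑ Q : Fin n → ι, P1 A Q * P1 Q C = P1 A C)
    (hn : ∀ M N : Fin (n+1) → ι, P2 M N = ∑ A : Fin n → ι, ∑ B : Fin n → ι,
      P1 (Fin.tail M) A * P2 (Fin.cons (M 0) A) (Fin.cons (N 0) B) * P1 B (Fin.tail N)) :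
    ∀ (m0 : ι) (A : Fin n → ι) (N' : Fin (n+1) → ι),
      ∑ Q' : Fin n → ι, P1 A Q' * P2 (Fin.cons m0 Q') N' = P2 (Fin.cons m0 A) N' := by
  intro m0 A N'
  calc ∑ Q' : Fin n → ι, P1 A Q' * P2 (Fin.cons m0 Q') N'
      = ∑ Q' : Fin n → ι, ∑ C : Fin n → ι, ∑ D : Fin n → ι,
          P1 A Q' * (P1 Q' C * (P2 (Fin.cons m0 C) (Fin.cons (N' 0) D) * P1 D (Fin.tail N'))) := by
        refine Finset.sum_congr rfl fun Q' _ => ?_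
        rw [hn (Fin.cons m0 Q') N']
        simp only [Fin.tail_cons, Fin.cons_zero, Finset.mul_sum]
        refine Finset.sum_congr rfl fun C _ => Finset.sum_congr rfl fun D _ => by ring
    _ = ∑ C : Fin n → ι, ∑ D : Fin n → ι,
          (∑ Q' : Fin n → ι, P1 A Q' * P1 Q' C) *
            (P2 (Fin.cons m0 C) (Fin.cons (N' 0) D) * P1 D (Fin.tail N')) := by
        rw [Finset.sum_comm]
        refine Finset.sum_congr rfl fun C _ => ?_
        rw [Finset.sum_comm]
        refine Finset.sum_congr rfl fun D _ => ?_
        rw [Finset.sum_mul]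
        refine Finset.sum_congr rfl fun Q' _ => by ring
    _ = P2 (Fin.cons m0 A) N' := by
        simp only [hidem]
        rw [hn (Fin.cons m0 A) N']
        simp only [Fin.tail_cons, Fin.cons_zero]
        exact Finset.sum_congr rfl fun C _ => Finset.sum_congr rfl fun D _ => by ring

/-- nondegeneracy from the projector pairing -/
lemma nondeg {V : Type} [AddCommGroup V] [Module ℝ V]
    (form : V →ₗ[ℝ] V →ₗ[ℝ] ℝ) {ι : Type} [Fintype ι] [DecidableEq ι] {n : ℕ}
    (EE FF : (Fin n → ι) → V) (Pm : (Fin n → ι) → (Fin n → ι) → ℝ) (am : ℝ) (ham : am ≠ 0)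
    (hform : ∀ A B, form (EE A) (FF B) = am * Pm A B)
    (hPF : ∀ B, FF B = ∑ A, Pm A B • FF A)
    (x : V) (hx : x ∈ Submodule.span ℝ (Set.range FF))
    (h0 : ∀ A, form (EE A) x = 0) : x = 0 := by
  obtain ⟨c, hc⟩ := (Submodule.mem_span_range_iff_exists_fun ℝ).mp hx
  have key : ∀ A, ∑ B, Pm A B * c B = 0 := by
    intro A
    have h := h0 A
    rw [← hc] at h
    simp only [map_sum, map_smul, hform, smul_eq_mul] at h
    have : am * ∑ B, Pm A B * c B = 0 := by
      rw [Finset.mul_sum]; rw [← h]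
      exact Finset.sum_congr rfl fun B _ => by ring
    exact (mul_eq_zero.mp this).resolve_left ham
  calc x = ∑ B, c B • FF B := hc.symm
    _ = ∑ B, c B • ∑ A, Pm A B • FF A := by
        exact Finset.sum_congr rfl fun B _ => by rw [← hPF B]
    _ = ∑ A, (∑ B, Pm A B * c B) • FF A := by
        simp only [Finset.smul_sum, smul_smul]
        rw [Finset.sum_comm]
        exact Finset.sum_congr rfl fun A _ => by rw [Finset.sum_smul]; exact Finset.sum_congr rfl fun B _ => by ring
    _ = 0 := by simp [key]


/-- With `𝚈^{N1⋯Nk}_{M1⋯M(k+1)} = (1/a_k) ⟦F^{N1⋯Nk}, E_{M1⋯M(k+1)}⟧` and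
`𝚇_{M|N1⋯Nk}^{P1⋯Pk} = (1/a_k) ⟦E_M, ⟦E_{N1⋯Nk}, F^{P1⋯Pk}⟧⟧` (and `p = k + 2 ≥ 2`):
`𝚈^{N1⋯Np}_{M1⋯M(p+1)} = − Σ_Q (ℙ_p)_{Q1⋯Qp}{}^{N1⋯Np} δ_{M1}^{Q1} 𝚈^{Q2⋯Qp}_{M2⋯M(p+1)}
− 𝚇_{M1|M2⋯M(p+1)}^{N1⋯Np}`. -/
theorem Y_recursion
    {V : Type} [AddCommGroup V] [Module ℝ V]
    (U : ℤ → Submodule ℝ V)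
    (bb : V →ₗ[ℝ] V →ₗ[ℝ] V)
    (form : V →ₗ[ℝ] V →ₗ[ℝ] ℝ)
    (hgrade : ∀ (p q : ℤ) (x y : V), x ∈ U p → y ∈ U q → bb x y ∈ U (p + q))
    (hanti : ∀ (p q : ℤ) (x y : V), x ∈ U p → y ∈ U q →
      bb x y = (-((-1 : ℝ) ^ (p * q))) • bb y x)
    (hjac : ∀ (p q : ℤ) (x y z : V), x ∈ U p → y ∈ U q →
      bb (bb x y) z = bb x (bb y z) - ((-1 : ℝ) ^ (p * q)) • bb y (bb x z))
    (hform0 : ∀ (p q : ℤ) (x y : V), x ∈ U p → y ∈ U q → p + q ≠ 0 → form x y = 0)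
    (hforminv : ∀ x y z : V, form (bb x y) z = form x (bb y z))
    {ι : Type} [Fintype ι] [DecidableEq ι]
    (E F : ι → V)
    (hE : ∀ M, E M ∈ U (-1))
    (hF : ∀ M, F M ∈ U 1)
    (hEF : ∀ M N, form (E M) (F N) = if M = N then (1 : ℝ) else 0)
    (hspanE : ∀ m : ℕ, 1 ≤ m → U (-(m : ℤ)) ≤ Submodule.span ℝ (Set.range (nest bb E m)))
    (hspanF : ∀ m : ℕ, 1 ≤ m → U (m : ℤ) ≤ Submodule.span ℝ (Set.range (nest bb F m)))
    (k : ℕ)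
    (P : (m : ℕ) → (Fin m → ι) → (Fin m → ι) → ℝ)
    (hP1 : ∀ M N : Fin 1 → ι, P 1 M N = if M 0 = N 0 then (1 : ℝ) else 0)
    (hPidem : ∀ m, 2 ≤ m → m ≤ k + 2 → ∀ M N : Fin m → ι,
      ∑ Q : Fin m → ι, P m M Q * P m Q N = P m M N)
    (hPE : ∀ m, 2 ≤ m → m ≤ k + 2 → ∀ M : Fin m → ι,
      nest bb E m M = ∑ N : Fin m → ι, P m M N • nest bb E m N)
    (hPF : ∀ m, 2 ≤ m → m ≤ k + 2 → ∀ N : Fin m → ι,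
      nest bb F m N = ∑ M : Fin m → ι, P m M N • nest bb F m M)
    (hPnest : ∀ m : ℕ, 2 ≤ m + 1 → m + 1 ≤ k + 2 → ∀ M N : Fin (m + 1) → ι,
      P (m + 1) M N = ∑ A : Fin m → ι, ∑ B : Fin m → ι,
        P m (Fin.tail M) A * P (m + 1) (Fin.cons (M 0) A) (Fin.cons (N 0) B) *
          P m B (Fin.tail N))
    (a : ℕ → ℝ)
    (ha1 : a 1 = 1)
    (hane : ∀ m, 1 ≤ m → m ≤ k + 2 → a m ≠ 0)
    (haP : ∀ m, 2 ≤ m → m ≤ k + 2 → ∀ M N : Fin m → ι,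
      form (nest bb E m M) (nest bb F m N) = a m * P m M N) :
    ∀ (N : Fin (k + 2) → ι) (M : Fin (k + 3) → ι),
      (a (k + 2))⁻¹ • bb (nest bb F (k + 2) N) (nest bb E (k + 3) M)
        = -(∑ Q : Fin (k + 2) → ι, P (k + 2) Q N •
              ((if M 0 = Q 0 then (1 : ℝ) else 0) •
                ((a (k + 1))⁻¹ •
                  bb (nest bb F (k + 1) (Fin.tail Q)) (nest bb E (k + 2) (Fin.tail M)))))
          - (a (k + 2))⁻¹ •
              bb (E (M 0)) (bb (nest bb E (k + 2) (Fin.tail M)) (nest bb F (k + 2) N)) := by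
  intro N M
  -- memberships
  have hFN : nest bb F (k+2) N ∈ U ((k:ℤ)+2) := by
    have h := nest_mem U bb F 1 hgrade hF (k+1) N
    have h2 : (((k+1:ℕ):ℤ)+1) * 1 = (k:ℤ)+2 := by push_cast; ring
    rwa [h2] at h
  have hE' : nest bb E (k+2) (Fin.tail M) ∈ U (-((k:ℤ)+2)) := by
    have h := nest_mem U bb E (-1) hgrade hE (k+1) (Fin.tail M)
    have h2 : (((k+1:ℕ):ℤ)+1) * (-1) = -((k:ℤ)+2) := by push_cast; ring
    rwa [h2] at h
  have hEM0 : E (M 0) ∈ U (-1) := hE _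

  -- more memberships
  have hEA : ∀ A : Fin (k+1) → ι, nest bb E (k+1) A ∈ U (-((k:ℤ)+1)) := by
    intro A
    have h := nest_mem U bb E (-1) hgrade hE k A
    have h2 : ((k:ℤ)+1) * (-1) = -((k:ℤ)+1) := by ring
    rwa [h2] at h
  have hFA : ∀ A : Fin (k+1) → ι, nest bb F (k+1) A ∈ U ((k:ℤ)+1) := by
    intro A
    have h := nest_mem U bb F 1 hgrade hF k A
    rwa [mul_one] at h
  have hidem1 := prime_idem (k+2) P hP1 hPidem (k+1) (by omega) (by omega)
  have haP1 := prime_aP bb form E F (k+2) P a hEF ha1 hP1 haP (k+1) (by omega) (by omega)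
  have hPF1 := prime_PF bb F (k+2) P hP1 hPF (k+1) (by omega) (by omega)
  have habs := absorb (P (k+1)) (P (k+2)) hidem1 (hPnest (k+1) (by omega) (by omega))
  have hm1 : (-1:ℝ) ≠ 0 := by norm_num
  have hx2 : ((-1:ℝ))^(k:ℤ) * ((-1:ℝ))^(k:ℤ) = 1 := by
    rw [← zpow_add₀ hm1, neg_one_zpow_congr ((k:ℤ)+(k:ℤ)) 0 ⟨(k:ℤ), by ring⟩, zpow_zero]
  have hsgn2 : (-((-1:ℝ))^(((k:ℤ)+2)*(-1))) * (-((-1:ℝ))^((-((k:ℤ)+1))*(-1))) = -1 := by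
    rw [neg_one_zpow_congr (((k:ℤ)+2)*(-1)) (k:ℤ) ⟨-((k:ℤ)+1), by ring⟩,
        neg_one_zpow_congr ((-((k:ℤ)+1))*(-1)) ((k:ℤ)+1) ⟨0, by ring⟩,
        zpow_add₀ hm1 (k:ℤ) 1, zpow_one]
    linear_combination (-1 : ℝ) * hx2
  -- the key lemma
  have key : bb (nest bb F (k+2) N) (E (M 0))
      = -((a (k+2) * (a (k+1))⁻¹) • ∑ Q : Fin (k+2) → ι,
          (P (k+2) Q N * (if M 0 = Q 0 then (1:ℝ) else 0)) • nest bb F (k+1) (Fin.tail Q)) := by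
    have hx0 : bb (nest bb F (k+2) N) (E (M 0)) + (a (k+2) * (a (k+1))⁻¹) •
        ∑ Q : Fin (k+2) → ι, (P (k+2) Q N * (if M 0 = Q 0 then (1:ℝ) else 0)) •
          nest bb F (k+1) (Fin.tail Q) = 0 := by
      apply nondeg form (nest bb E (k+1)) (nest bb F (k+1)) (P (k+1)) (a (k+1))
        (hane (k+1) (by omega) (by omega)) haP1 hPF1
      · -- membership in span
        apply hspanF (k+1) (by omega)
        have hmem1 : bb (nest bb F (k+2) N) (E (M 0)) ∈ U (((k+1:ℕ)):ℤ) := by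
          have h := hgrade ((k:ℤ)+2) (-1) _ _ hFN hEM0
          have h2 : (k:ℤ)+2 + (-1) = ((k+1:ℕ):ℤ) := by push_cast; ring
          rwa [h2] at h
        refine Submodule.add_mem _ hmem1 (Submodule.smul_mem _ _
          (Submodule.sum_mem _ fun Q _ => Submodule.smul_mem _ _ ?_))
        have h := hFA (Fin.tail Q)
        have h2 : (k:ℤ)+1 = ((k+1:ℕ):ℤ) := by push_cast; ring
        rwa [h2] at h
      · intro A
        rw [map_add, map_smul, map_sum]
        have t1 : form (nest bb E (k+1) A) (bb (nest bb F (k+2) N) (E (M 0)))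
            = -(a (k+2) * P (k+2) (Fin.cons (M 0) A) N) := by
          rw [hanti ((k:ℤ)+2) (-1) _ _ hFN hEM0, map_smul, smul_eq_mul]
          rw [← hforminv (nest bb E (k+1) A) (E (M 0)) (nest bb F (k+2) N)]
          rw [hanti (-((k:ℤ)+1)) (-1) _ _ (hEA A) hEM0]
          rw [map_smul, LinearMap.smul_apply, smul_eq_mul]
          rw [← nest_cons bb E k (M 0) A]
          rw [haP (k+2) (by omega) (by omega) (Fin.cons (M 0) A) N]
          rw [← mul_assoc, hsgn2]
          ring
        rw [t1]
        simp only [map_smul, smul_eq_mul, haP1]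
        have hsum : ∑ Q : Fin (k+2) → ι,
            (P (k+2) Q N * if M 0 = Q 0 then (1:ℝ) else 0) * (a (k+1) * P (k+1) A (Fin.tail Q))
            = a (k+1) * P (k+2) (Fin.cons (M 0) A) N := by
          rw [sum_cons_split (k+1) (fun Q => (P (k+2) Q N * if M 0 = Q 0 then (1:ℝ) else 0) *
            (a (k+1) * P (k+1) A (Fin.tail Q)))]
          simp only [Fin.tail_cons, Fin.cons_zero]
          have hcol : ∀ q : ι, (∑ Q' : Fin (k+1) → ι,
              (P (k+2) (Fin.cons q Q') N * if M 0 = q then (1:ℝ) else 0) *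
                (a (k+1) * P (k+1) A Q'))
              = if M 0 = q then a (k+1) *
                  (∑ Q' : Fin (k+1) → ι, P (k+1) A Q' * P (k+2) (Fin.cons q Q') N) else 0 := by
            intro q
            split
            · rw [Finset.mul_sum]
              refine Finset.sum_congr rfl fun Q' _ => by ring
            · simp
          rw [Finset.sum_congr rfl fun q _ => hcol q]
          rw [Finset.sum_ite_eq Finset.univ (M 0)
            (fun q => a (k+1) * (∑ Q' : Fin (k+1) → ι, P (k+1) A Q' * P (k+2) (Fin.cons q Q') N))]
          simp only [Finset.mem_univ, if_true]
          rw [habs (M 0) A N]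
        rw [hsum]
        have hinv : a (k+1) ≠ 0 := hane (k+1) (by omega) (by omega)
        field_simp
        ring
    exact eq_neg_of_add_eq_zero_left hx0
  have hsgn : ((-1:ℝ))^(((k:ℤ)+2)*(-1)) * (-((-1:ℝ))^(((k:ℤ)+2)*(-((k:ℤ)+2)))) = -1 := by
    rw [neg_one_zpow_congr (((k:ℤ)+2)*(-1)) (k:ℤ) ⟨-((k:ℤ)+1), by ring⟩]
    have heven : Even (((k:ℤ)+2)*(-((k:ℤ)+2)) - (k:ℤ)) := by
      rcases Int.even_or_odd (k:ℤ) with ⟨c, hc⟩ | ⟨c, hc⟩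
      · exact ⟨-2*c^2 - 5*c - 2, by rw [hc]; ring⟩
      · exact ⟨-2*c^2 - 7*c - 5, by rw [hc]; ring⟩
    rw [neg_one_zpow_congr (((k:ℤ)+2)*(-((k:ℤ)+2))) (k:ℤ) heven]
    linear_combination (-1 : ℝ) * hx2
  -- Jacobi expansion
  have expand : bb (nest bb F (k+2) N) (bb (E (M 0)) (nest bb E (k+2) (Fin.tail M)))
      = bb (bb (nest bb F (k+2) N) (E (M 0))) (nest bb E (k+2) (Fin.tail M))
        + ((-1:ℝ))^(((k:ℤ)+2)*(-1)) • bb (E (M 0)) (bb (nest bb F (k+2) N) (nest bb E (k+2) (Fin.tail M))) := by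
    have h := hjac ((k:ℤ)+2) (-1) (nest bb F (k+2) N) (E (M 0)) (nest bb E (k+2) (Fin.tail M)) hFN hEM0
    rw [h]; abel
  have t2 : ((-1:ℝ))^(((k:ℤ)+2)*(-1)) • bb (E (M 0)) (bb (nest bb F (k+2) N) (nest bb E (k+2) (Fin.tail M)))
      = -(bb (E (M 0)) (bb (nest bb E (k+2) (Fin.tail M)) (nest bb F (k+2) N))) := by
    rw [hanti ((k:ℤ)+2) (-((k:ℤ)+2)) _ _ hFN hE', map_smul, smul_smul, hsgn]
    simp
  have hnest3 : nest bb E (k+3) M = bb (E (M 0)) (nest bb E (k+2) (Fin.tail M)) := rfl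
  rw [hnest3, expand, t2, key]
  have hA : (a (k+2))⁻¹ * (a (k+2) * (a (k+1))⁻¹) = (a (k+1))⁻¹ := by
    rw [← mul_assoc, inv_mul_cancel₀ (hane (k+2) (by omega) (by omega)), one_mul]
  simp only [map_neg, map_smul, map_sum, LinearMap.neg_apply, LinearMap.smul_apply,
    LinearMap.sum_apply, smul_add, smul_neg, smul_smul, hA]
  rw [sub_eq_add_neg]
  congr 1
  rw [neg_inj, Finset.smul_sum]
  refine Finset.sum_congr rfl fun Q _ => ?_
  have hs : ((a (k+1))⁻¹ * (P (k+2) Q N * if M 0 = Q 0 then (1:ℝ) else 0))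
      = (P (k+2) Q N * ((if M 0 = Q 0 then (1:ℝ) else 0) * (a (k+1))⁻¹)) := by ring
  rw [smul_smul, hs]
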